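/- The combinatorial bound Σ_{m=1}^{n} S(n,m) Σ_{k=1}^{m} k^{m−1} ≤ n! e^{3n} holds for all n ≥ 1, where S(n,m) are Stirling numbers of the second kind. -/

import Mathlib

open Finset

/-- The Stirling number of the second kind `S(n,m)`. -/
noncomputable def stirling (n m : ℕ) : ℕ :=
  Fintype.card {P : Finpartition (Finset.range n) // P.parts.card = m}

lemma stirling_mul_factorial_le (n m : ℕ) (hm : 1 ≤ m) :
    stirling n m * m.factorial ≤ m ^ n := by
  classical
  have hne : Nonempty (Fin m) := ⟨⟨0, hm⟩⟩
  set T := {P : Finpartition (Finset.range n) // P.parts.card = m} with hT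
  have hcard : stirling n m * m.factorial = Fintype.card (T × Equiv.Perm (Fin m)) := by
    rw [Fintype.card_prod, Fintype.card_perm, Fintype.card_fin, stirling]
  rw [hcard, show m ^ n = Fintype.card (Fin n → Fin m) by simp]
  have e : ∀ P : T, (P.1.parts : Finset (Finset ℕ)) ≃ Fin m := fun P =>
    Fintype.equivFinOfCardEq (by rw [Fintype.card_coe]; exact P.2)
  set F : T × Equiv.Perm (Fin m) → (Fin n → Fin m) := fun Pσ x =>
    Pσ.2 (e Pσ.1 ⟨Pσ.1.1.part x, Pσ.1.1.part_mem.2 (Finset.mem_range.2 x.isLt)⟩) with hF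
  apply Fintype.card_le_of_injective F
  rintro ⟨⟨P, hP⟩, σ⟩ ⟨⟨Q, hQ⟩, τ⟩ h
  have hfun : ∀ x : Fin n,
      σ (e ⟨P, hP⟩ ⟨P.part x, P.part_mem.2 (Finset.mem_range.2 x.isLt)⟩)
        = τ (e ⟨Q, hQ⟩ ⟨Q.part x, Q.part_mem.2 (Finset.mem_range.2 x.isLt)⟩) :=
    fun x => congrFun h x
  -- same part ↔ equal value, for P
  have keyP : ∀ x y : Fin n, F (⟨⟨P, hP⟩, σ⟩) x = F (⟨⟨P, hP⟩, σ⟩) y ↔ P.part x = P.part y := by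
    intro x y
    constructor
    · intro hxy
      have := σ.injective hxy
      have := (e ⟨P, hP⟩).injective this
      exact congrArg Subtype.val this
    · intro hxy
      simp only [hF]
      congr 1
      exact congrArg _ (Subtype.ext hxy)
  have keyQ : ∀ x y : Fin n, F (⟨⟨Q, hQ⟩, τ⟩) x = F (⟨⟨Q, hQ⟩, τ⟩) y ↔ Q.part x = Q.part y := by
    intro x y
    constructor
    · intro hxy
      have := τ.injective hxy
      have := (e ⟨Q, hQ⟩).injective this
      exact congrArg Subtype.val this
    · intro hxy
      simp only [hF]
      congr 1
      exact congrArg _ (Subtype.ext hxy)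
  have hpart : ∀ x : Fin n, P.part x = Q.part x := by
    intro x
    ext a
    constructor
    · intro ha
      have han : a ∈ Finset.range n := P.le (P.part_mem.2 (Finset.mem_range.2 x.isLt)) ha
      have hx : (x : ℕ) ∈ Finset.range n := Finset.mem_range.2 x.isLt
      set a' : Fin n := ⟨a, Finset.mem_range.1 han⟩
      have h1 : P.part a' = P.part x :=
        (P.mem_part_iff_part_eq_part han hx).1 ha
      have h2 : F (⟨⟨P, hP⟩, σ⟩) a' = F (⟨⟨P, hP⟩, σ⟩) x := (keyP a' x).2 h1
      have h3 : F (⟨⟨Q, hQ⟩, τ⟩) a' = F (⟨⟨Q, hQ⟩, τ⟩) x := by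
        rwa [h] at h2
      have h4 : Q.part a' = Q.part x := (keyQ a' x).1 h3
      exact (Q.mem_part_iff_part_eq_part han hx).2 h4
    · intro ha
      have han : a ∈ Finset.range n := Q.le (Q.part_mem.2 (Finset.mem_range.2 x.isLt)) ha
      have hx : (x : ℕ) ∈ Finset.range n := Finset.mem_range.2 x.isLt
      set a' : Fin n := ⟨a, Finset.mem_range.1 han⟩
      have h1 : Q.part a' = Q.part x :=
        (Q.mem_part_iff_part_eq_part han hx).1 ha
      have h3 : F (⟨⟨P, hP⟩, σ⟩) a' = F (⟨⟨P, hP⟩, σ⟩) x := by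
        rw [h]; exact (keyQ a' x).2 h1
      have h4 : P.part a' = P.part x := (keyP a' x).1 h3
      exact (P.mem_part_iff_part_eq_part han hx).2 h4
  have hPQ : P = Q := by
    ext t
    constructor
    · intro ht
      obtain ⟨x, hx, hxt⟩ := P.part_surjOn ht
      have hx' : x ∈ Finset.range n := hx
      have : P.part x = t := hxt
      rw [hpart ⟨x, Finset.mem_range.1 hx'⟩] at this
      exact this ▸ Q.part_mem.2 hx'
    · intro ht
      obtain ⟨x, hx, hxt⟩ := Q.part_surjOn ht
      have hx' : x ∈ Finset.range n := hx
      have : Q.part x = t := hxt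
      rw [← hpart ⟨x, Finset.mem_range.1 hx'⟩] at this
      exact this ▸ P.part_mem.2 hx'
  subst hPQ
  have hστ : σ = τ := by
    apply Equiv.ext
    intro i
    set t := (e ⟨P, hP⟩).symm i with hti
    obtain ⟨x, hx⟩ := P.nonempty_of_mem_parts t.2
    have hxn : x ∈ Finset.range n := P.le t.2 hx
    set x' : Fin n := ⟨x, Finset.mem_range.1 hxn⟩
    have hpt : P.part x' = t.1 := P.part_eq_of_mem t.2 hx
    have h1 := hfun x'
    have ht1 : (⟨P.part x', P.part_mem.2 (Finset.mem_range.2 x'.isLt)⟩ :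
        (P.parts : Finset (Finset ℕ))) = t := Subtype.ext hpt
    rw [ht1] at h1
    simpa [hti] using h1
  simp [hστ]

/-- The combinatorial bound `Σ_{m=1}^{n} S(n,m) Σ_{k=1}^{m} k^{m−1} ≤ n! e^{3n}`
for all `n ≥ 1`. -/
theorem stirling_combinatorial_bound (n : ℕ) (hn : 1 ≤ n) :
    (∑ m ∈ Finset.Icc 1 n, (stirling n m : ℝ) * ∑ k ∈ Finset.Icc 1 m, (k : ℝ) ^ (m - 1))
      ≤ (n.factorial : ℝ) * Real.exp 1 ^ (3 * n) := by
  have hterm : ∀ m ∈ Finset.Icc 1 n,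
      (stirling n m : ℝ) * ∑ k ∈ Finset.Icc 1 m, (k : ℝ) ^ (m - 1)
        ≤ (n : ℝ) ^ n * Real.exp n := by
    intro m hm
    obtain ⟨hm1, hmn⟩ := Finset.mem_Icc.1 hm
    have hinner : (∑ k ∈ Finset.Icc 1 m, (k : ℝ) ^ (m - 1)) ≤ (m : ℝ) ^ m := by
      calc ∑ k ∈ Finset.Icc 1 m, (k : ℝ) ^ (m - 1)
          ≤ ∑ _k ∈ Finset.Icc 1 m, (m : ℝ) ^ (m - 1) := by
            apply Finset.sum_le_sum
            intro k hk
            exact pow_le_pow_left₀ (by positivity)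
              (Nat.cast_le.2 (Finset.mem_Icc.1 hk).2) _
        _ = (m : ℝ) * (m : ℝ) ^ (m - 1) := by
            rw [Finset.sum_const, Nat.card_Icc]; simp
        _ = (m : ℝ) ^ m := by
            rw [← pow_succ']
            congr 1
            omega
    have hmm : (m : ℝ) ^ m ≤ (m.factorial : ℝ) * Real.exp m := by
      have := Real.pow_div_factorial_le_exp (x := (m : ℝ)) (by positivity) m
      rw [div_le_iff₀ (by positivity)] at this
      linarith [this]
    have hSf : (stirling n m : ℝ) * (m.factorial : ℝ) ≤ (m : ℝ) ^ n := by
      have := stirling_mul_factorial_le n m hm1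
      calc (stirling n m : ℝ) * (m.factorial : ℝ) = ((stirling n m * m.factorial : ℕ) : ℝ) := by
            push_cast; ring
        _ ≤ ((m ^ n : ℕ) : ℝ) := Nat.cast_le.2 this
        _ = (m : ℝ) ^ n := by push_cast; ring
    have hS0 : (0 : ℝ) ≤ (stirling n m : ℝ) := Nat.cast_nonneg _
    calc (stirling n m : ℝ) * ∑ k ∈ Finset.Icc 1 m, (k : ℝ) ^ (m - 1)
        ≤ (stirling n m : ℝ) * ((m.factorial : ℝ) * Real.exp m) :=
          mul_le_mul_of_nonneg_left (hinner.trans hmm) hS0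
      _ = ((stirling n m : ℝ) * (m.factorial : ℝ)) * Real.exp m := by ring
      _ ≤ (m : ℝ) ^ n * Real.exp m := by
          apply mul_le_mul_of_nonneg_right hSf (Real.exp_nonneg _)
      _ ≤ (n : ℝ) ^ n * Real.exp n := by
          apply mul_le_mul
          · exact pow_le_pow_left₀ (by positivity) (Nat.cast_le.2 hmn) _
          · exact Real.exp_le_exp.2 (Nat.cast_le.2 hmn)
          · exact Real.exp_nonneg _
          · positivity
  calc (∑ m ∈ Finset.Icc 1 n, (stirling n m : ℝ) * ∑ k ∈ Finset.Icc 1 m, (k : ℝ) ^ (m - 1))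
      ≤ ∑ _m ∈ Finset.Icc 1 n, (n : ℝ) ^ n * Real.exp n := Finset.sum_le_sum hterm
    _ = (n : ℝ) * ((n : ℝ) ^ n * Real.exp n) := by
        rw [Finset.sum_const, Nat.card_Icc]; simp
    _ ≤ Real.exp n * (((n.factorial : ℝ) * Real.exp n) * Real.exp n) := by
        apply mul_le_mul
        · have := Real.add_one_le_exp (n : ℝ); linarith
        · apply mul_le_mul_of_nonneg_right _ (Real.exp_nonneg _)
          have := Real.pow_div_factorial_le_exp (x := (n : ℝ)) (by positivity) n
          rw [div_le_iff₀ (by positivity)] at this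
          linarith
        · positivity
        · positivity
    _ = (n.factorial : ℝ) * Real.exp 1 ^ (3 * n) := by
        rw [show Real.exp 1 ^ (3 * n) = Real.exp (3 * n) by
          rw [← Real.exp_nat_mul]; push_cast; ring_nf]
        rw [show (3 : ℝ) * (n : ℝ) = (n : ℝ) + ((n : ℝ) + (n : ℝ)) by ring]
        rw [Real.exp_add, Real.exp_add]
        ring
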